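/- Let M > 0. There exists a constant C > 0 (depending only on M) such that: for all r and t with 0 < r ≤ e⁻², t ≥ e, and F(r) ≤ M/t², one has r ≤ C·(log t)/t². Consequently, if r : [0,∞) → (0,∞) satisfies r(t) → 0 as t → ∞ and F(r(t)) ≤ M/t² for all sufficiently large t, then there exist constants C_r > 0 and T_r > 0 with r(t) ≤ C_r·(log t)/t² for all t ≥ T_r. -/

import Mathlib

open MeasureTheory Filter

/-- `F(0) = 0`, `F(r) = ∫₀^r du/(−log u)` for `0 < r ≤ e⁻²`,
`F(r) = F(e⁻²) + (1/2)(r − e⁻²)` for `r ≥ e⁻²`. -/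
noncomputable def F (r : ℝ) : ℝ :=
  if r ≤ Real.exp (-2) then ∫ u in (0:ℝ)..r, 1 / (-Real.log u)
  else (∫ u in (0:ℝ)..Real.exp (-2), 1 / (-Real.log u)) + (1/2) * (r - Real.exp (-2))

lemma intInt_aux {a b : ℝ} (ha : 0 ≤ a) (hab : a ≤ b) (hb : b ≤ Real.exp (-2)) :
    IntervalIntegrable (fun u => 1 / (-Real.log u)) volume a b := by
  rw [intervalIntegrable_iff_integrableOn_Ioc_of_le hab]
  apply Integrable.mono' (g := fun _ => (1:ℝ)/2)
  · exact integrableOn_const measure_Ioc_lt_top.ne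
  · simp only [one_div]
    exact (Real.measurable_log.neg.inv).aestronglyMeasurable
  · filter_upwards [ae_restrict_mem measurableSet_Ioc] with u hu
    have hu0 : 0 < u := lt_of_le_of_lt ha hu.1
    have hlog : Real.log u ≤ -2 := by
      have := Real.log_le_log hu0 (hu.2.trans hb)
      simpa [Real.log_exp] using this
    have h2 : (2:ℝ) ≤ -Real.log u := by linarith
    have hpos : (0:ℝ) < -Real.log u := by linarith
    rw [Real.norm_eq_abs, abs_of_nonneg (by positivity)]
    rw [div_le_div_iff₀ hpos (by norm_num)]
    linarith

lemma key_bound (M : ℝ) (hM : 0 < M) (r t : ℝ) (hr : 0 < r)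
    (hre : r ≤ Real.exp (-2)) (hte : Real.exp 1 ≤ t) (hF : F r ≤ M / t ^ 2) :
    r ≤ (1 + 6 * M) * Real.log t / t ^ 2 := by
  have ht0 : (0:ℝ) < t := lt_of_lt_of_le (Real.exp_pos 1) hte
  have ht2 : (0:ℝ) < t ^ 2 := by positivity
  have hlogt : 1 ≤ Real.log t := by
    have := Real.log_le_log (Real.exp_pos 1) hte
    simpa [Real.log_exp] using this
  have hr1 : r ≤ 1 := hre.trans (by
    have := Real.exp_lt_one_iff.2 (by norm_num : (-2:ℝ) < 0)
    linarith)
  -- log(r/2) ≤ -2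
  have hhalf : r / 2 ≤ Real.exp (-2) := by linarith
  have hhalf0 : 0 < r / 2 := by linarith
  have hlogr2 : Real.log (r/2) ≤ -2 := by
    have := Real.log_le_log hhalf0 hhalf
    simpa [Real.log_exp] using this
  have hLpos : (0:ℝ) < -Real.log (r/2) := by linarith
  -- F r = the integral
  have hFr : F r = ∫ u in (0:ℝ)..r, 1 / (-Real.log u) := by
    rw [F, if_pos hre]
  -- lower bound on F r
  have hsplit : (∫ u in (0:ℝ)..r, 1 / (-Real.log u)) =
      (∫ u in (0:ℝ)..(r/2), 1 / (-Real.log u)) +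
      ∫ u in (r/2)..r, 1 / (-Real.log u) := by
    rw [intervalIntegral.integral_add_adjacent_intervals
      (intInt_aux le_rfl hhalf0.le hhalf) (intInt_aux hhalf0.le (by linarith) hre)]
  have h1 : 0 ≤ ∫ u in (0:ℝ)..(r/2), 1 / (-Real.log u) := by
    apply intervalIntegral.integral_nonneg hhalf0.le
    intro u hu
    apply div_nonneg zero_le_one
    rw [neg_nonneg]
    exact Real.log_nonpos hu.1 (by linarith [hu.2])
  have h2 : (r/2) * (1 / (-Real.log (r/2))) ≤ ∫ u in (r/2)..r, 1 / (-Real.log u) := by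
    have hc : (∫ _ in (r/2)..r, 1 / (-Real.log (r/2))) =
        (r - r/2) * (1 / (-Real.log (r/2))) := by
      simp [intervalIntegral.integral_const, smul_eq_mul]
    have hmono : (∫ _ in (r/2)..r, 1 / (-Real.log (r/2))) ≤
        ∫ u in (r/2)..r, 1 / (-Real.log u) := by
      apply intervalIntegral.integral_mono_on (by linarith)
        (intervalIntegrable_const) (intInt_aux hhalf0.le (by linarith) hre)
      intro u hu
      have hu0 : 0 < u := lt_of_lt_of_le hhalf0 hu.1
      have hlogu : Real.log u ≤ -2 := by
        have := Real.log_le_log hu0 (hu.2.trans hre)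
        simpa [Real.log_exp] using this
      have hupos : (0:ℝ) < -Real.log u := by linarith
      have hle : -Real.log u ≤ -Real.log (r/2) := by
        have := Real.log_le_log hhalf0 hu.1
        linarith
      exact one_div_le_one_div_of_le hupos hle
    calc (r/2) * (1 / (-Real.log (r/2)))
        = (r - r/2) * (1 / (-Real.log (r/2))) := by ring_nf
      _ ≤ _ := hc ▸ hmono
  have hFlow : (r/2) * (1 / (-Real.log (r/2))) ≤ F r := by
    rw [hFr, hsplit]; linarith
  -- hence r ≤ 2 * (-log(r/2)) * F r
  have hkey : r ≤ 2 * (-Real.log (r/2)) * (M / t ^ 2) := by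
    have h3 : (r/2) * (1 / (-Real.log (r/2))) ≤ M / t ^ 2 := hFlow.trans hF
    have := mul_le_mul_of_nonneg_left h3 (le_of_lt (by positivity : (0:ℝ) < 2 * (-Real.log (r/2))))
    have hne : Real.log (r/2) ≠ 0 := by intro h; rw [h] at hlogr2; norm_num at hlogr2
    calc r = 2 * (-Real.log (r/2)) * ((r/2) * (1 / (-Real.log (r/2)))) := by
          field_simp
      _ ≤ 2 * (-Real.log (r/2)) * (M / t ^ 2) := this
  rcases le_or_gt r (1 / t ^ 2) with hcase | hcase
  · -- small case
    have : 1 / t ^ 2 ≤ (1 + 6 * M) * Real.log t / t ^ 2 := by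
      gcongr
      nlinarith
    linarith
  · -- r > 1/t², so -log r < 2 log t
    have hlogr : -Real.log r < 2 * Real.log t := by
      have h4 : Real.log (1 / t ^ 2) < Real.log r := Real.log_lt_log (by positivity) hcase
      have h5 : Real.log (1 / t ^ 2) = -(2 * Real.log t) := by
        rw [one_div, Real.log_inv, Real.log_pow]
        push_cast; ring
      linarith
    have hlog2 : Real.log (r/2) = Real.log r - Real.log 2 :=
      Real.log_div (ne_of_gt hr) two_ne_zero
    have hlog2lt : Real.log 2 < 1 := by
      have := Real.log_two_lt_d9
      linarith
    have hbound : -Real.log (r/2) ≤ 3 * Real.log t := by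
      rw [hlog2]; nlinarith
    have : 2 * (-Real.log (r/2)) * (M / t ^ 2) ≤ 6 * M * Real.log t / t ^ 2 := by
      have heq : 2 * (-Real.log (r/2)) * (M / t ^ 2) =
          (2 * (-Real.log (r/2)) * M) / t ^ 2 := by ring
      rw [heq, div_le_div_iff₀ ht2 ht2]
      nlinarith [mul_le_mul_of_nonneg_right hbound (mul_nonneg hM.le ht2.le)]
    have hfin : 6 * M * Real.log t / t ^ 2 ≤ (1 + 6 * M) * Real.log t / t ^ 2 := by
      gcongr
      nlinarith
    linarith

theorem radial_decay_bound (M : ℝ) (hM : 0 < M) :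
    (∃ C > (0:ℝ), ∀ r t : ℝ, 0 < r → r ≤ Real.exp (-2) → Real.exp 1 ≤ t →
      F r ≤ M / t ^ 2 → r ≤ C * Real.log t / t ^ 2) ∧
    (∀ r : ℝ → ℝ, (∀ t ≥ (0:ℝ), 0 < r t) →
      Filter.Tendsto r Filter.atTop (nhds 0) →
      (∀ᶠ t in Filter.atTop, F (r t) ≤ M / t ^ 2) →
      ∃ Cr > (0:ℝ), ∃ Tr > (0:ℝ), ∀ t ≥ Tr, r t ≤ Cr * Real.log t / t ^ 2) := by
  constructor
  · exact ⟨1 + 6 * M, by linarith, key_bound M hM⟩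
  · intro r hpos htend hF
    have hsmall : ∀ᶠ t in atTop, r t ≤ Real.exp (-2) := by
      have := htend.eventually (eventually_le_nhds (Real.exp_pos (-2)))
      simpa using this
    have hge : ∀ᶠ t in atTop, Real.exp 1 ≤ t := eventually_ge_atTop _
    obtain ⟨T, hT⟩ := (hsmall.and (hge.and hF)).exists_forall_of_atTop
    refine ⟨1 + 6 * M, by linarith, max T (Real.exp 1),
      lt_of_lt_of_le (Real.exp_pos 1) (le_max_right _ _), ?_⟩
    intro t ht
    have ht1 : T ≤ t := le_trans (le_max_left _ _) ht
    have ht2 : Real.exp 1 ≤ t := le_trans (le_max_right _ _) ht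
    obtain ⟨h1, h2, h3⟩ := hT t ht1
    have ht0 : (0:ℝ) ≤ t := le_trans (Real.exp_pos 1).le ht2
    exact key_bound M hM (r t) t (hpos t ht0) h1 ht2 h3
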